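/- For every a ∈ (0,2) ∪ (2,4) ∪ (4,6), the normal map ν restricted to the level surface Σ_a = {p ∈ [−π,π)³ : e(p) = a} is surjective onto the unit sphere S²: for every unit vector ω ∈ ℝ³ there exists p with e(p) = a, sin²p₁ + sin²p₂ + sin²p₃ > 0, and ν(p) = ω. Moreover, for a ∈ (0,2) ∪ (4,6) the map ν : Σ_a → S² is bijective. -/

import Mathlib

open Real

noncomputable section

/-- The dispersion relation `e(p) = ∑ (1 - cos pⱼ)`. -/
def e3 (p : Fin 3 → ℝ) : ℝ := ∑ i, (1 - Real.cos (p i))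

/-- `ssum p = sin²p₁ + sin²p₂ + sin²p₃`. -/
def ssum (p : Fin 3 → ℝ) : ℝ := ∑ i, Real.sin (p i) ^ 2

/-- The normal map `ν(p) = (sin p₁, sin p₂, sin p₃)/(sin²p₁+sin²p₂+sin²p₃)^{1/2}`. -/
def nuf (p : Fin 3 → ℝ) : Fin 3 → ℝ := fun i => Real.sin (p i) / Real.sqrt (ssum p)

/-- The fundamental domain `[−π,π)³` of the torus. -/
def box : Set (Fin 3 → ℝ) := {p | ∀ i, -π ≤ p i ∧ p i < π}

/-- The unit sphere `S²`. -/
def sph : Set (Fin 3 → ℝ) := {ω | ∑ i, ω i ^ 2 = 1}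


/-- Injectivity of (cos, sin) on [-π, π). -/
lemma angle_inj {x y : ℝ} (hx1 : -π ≤ x) (hx2 : x < π) (hy1 : -π ≤ y) (hy2 : y < π)
    (hc : Real.cos x = Real.cos y) (hs : Real.sin x = Real.sin y) : x = y := by
  have hpi := Real.pi_pos
  have habs : |x| = |y| := by
    apply Real.injOn_cos (by constructor <;> [positivity; exact abs_le.2 ⟨hx1, hx2.le⟩])
      (by constructor <;> [positivity; exact abs_le.2 ⟨hy1, hy2.le⟩])
    rw [Real.cos_abs, Real.cos_abs, hc]
  rcases abs_eq_abs.1 habs with h | h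
  · exact h
  · -- x = -y
    subst h
    rw [Real.sin_neg] at hs
    have hy0 : Real.sin y = 0 := by linarith
    rcases eq_or_lt_of_le hy1 with h1 | h1
    · rw [← h1] at hx2; simp at hx2
    · have : y = 0 := (Real.sin_eq_zero_iff_of_lt_of_lt (by linarith) hy2).1 hy0
      simp [this]

lemma alg_key {Bi Bj Bk : ℝ} (h1 : 0 < Bi) (h2 : 0 < Bj) (h3 : Bj ≤ 1) (h4 : 0 < Bk)
    (h5 : Bk ≤ 1) (h6 : 1 + Bi < Bj + Bk) :
    (1 - Bj^2)/Bj + (1 - Bk^2)/Bk < (1 - Bi^2)/Bi := by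
  rw [div_add_div _ _ (ne_of_gt h2) (ne_of_gt h4), div_lt_div_iff₀ (by positivity) h1]
  nlinarith [mul_pos h2 h4, sq_nonneg (Bj - Bk), mul_nonneg (sub_nonneg.2 h3) (sub_nonneg.2 h5),
    mul_pos (mul_pos h1 h2) h4, sq_nonneg (Bj + Bk - 1 - Bi),
    mul_nonneg (mul_nonneg h1.le (sub_nonneg.2 h3)) (sub_nonneg.2 h5),
    mul_pos h1 (mul_pos h2 h4)]

noncomputable def psiF (c1 c2 c3 t : ℝ) : ℝ :=
  -Real.sqrt (1 - t*c1) + (Real.sqrt (1 - t*c2) + Real.sqrt (1 - t*c3))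

lemma psiF_cont (c1 c2 c3 : ℝ) : Continuous (psiF c1 c2 c3) := by
  unfold psiF
  fun_prop

lemma hds (c : ℝ) {t : ℝ} (h : 1 - t*c ≠ 0) :
    HasDerivAt (fun s => Real.sqrt (1 - s*c)) (-c/(2*Real.sqrt (1-t*c))) t := by
  have inner : HasDerivAt (fun s : ℝ => 1 - s*c) (-c) t := by
    simpa using ((hasDerivAt_id t).mul_const c).const_sub 1
  have := (Real.hasDerivAt_sqrt h).comp t inner
  refine this.congr_deriv ?_
  field_simp

lemma psiF_hasDeriv (c1 c2 c3 : ℝ) {t : ℝ} (h1 : 1 - t*c1 ≠ 0) (h2 : 1 - t*c2 ≠ 0)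
    (h3 : 1 - t*c3 ≠ 0) :
    HasDerivAt (psiF c1 c2 c3)
      (c1/(2*Real.sqrt (1-t*c1)) - c2/(2*Real.sqrt (1-t*c2)) - c3/(2*Real.sqrt (1-t*c3))) t := by
  have := ((hds c1 h1).neg).add ((hds c2 h2).add (hds c3 h3))
  refine this.congr_deriv ?_
  ring

/-- the minus-branch function is strictly increasing while it stays above 1 -/
lemma psi_deriv_pos {c1 c2 c3 t : ℝ} (hc2 : 0 ≤ c2) (hc3 : 0 ≤ c3)
    (h21 : c2 < c1) (h31 : c3 < c1) (ht : 0 < t) (htc : t * c1 < 1)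
    (hgt : 1 < psiF c1 c2 c3 t) : 0 < deriv (psiF c1 c2 c3) t := by
  have e2 : t * c2 < 1 := by nlinarith
  have e3 : t * c3 < 1 := by nlinarith
  have hB1 : 0 < Real.sqrt (1 - t*c1) := Real.sqrt_pos.2 (by linarith)
  have hB2 : 0 < Real.sqrt (1 - t*c2) := Real.sqrt_pos.2 (by linarith)
  have hB3 : 0 < Real.sqrt (1 - t*c3) := Real.sqrt_pos.2 (by linarith)
  have hB2le : Real.sqrt (1 - t*c2) ≤ 1 := Real.sqrt_le_one.2 (by nlinarith)
  have hB3le : Real.sqrt (1 - t*c3) ≤ 1 := Real.sqrt_le_one.2 (by nlinarith)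
  rw [(psiF_hasDeriv c1 c2 c3 (by linarith) (by linarith) (by linarith)).deriv]
  set B1 := Real.sqrt (1 - t*c1) with hB1d
  set B2 := Real.sqrt (1 - t*c2) with hB2d
  set B3 := Real.sqrt (1 - t*c3) with hB3d
  have s1 : B1^2 = 1 - t*c1 := Real.sq_sqrt (by linarith)
  have s2 : B2^2 = 1 - t*c2 := Real.sq_sqrt (by linarith)
  have s3 : B3^2 = 1 - t*c3 := Real.sq_sqrt (by linarith)
  have hgt' : 1 + B1 < B2 + B3 := by unfold psiF at hgt; rw [← hB1d, ← hB2d, ← hB3d] at hgt; linarith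
  have key := alg_key hB1 hB2 hB2le hB3 hB3le hgt'
  have hc1' : c1 = (1 - B1^2)/t := by rw [s1]; field_simp; ring
  have hc2' : c2 = (1 - B2^2)/t := by rw [s2]; field_simp; ring
  have hc3' : c3 = (1 - B3^2)/t := by rw [s3]; field_simp; ring
  rw [hc1', hc2', hc3']
  have expand : (1 - B1^2)/t/(2*B1) - (1 - B2^2)/t/(2*B2) - (1 - B3^2)/t/(2*B3)
      = ((1 - B1^2)/B1 - ((1 - B2^2)/B2 + (1 - B3^2)/B3))/(2*t) := by
    field_simp
    ring
  rw [expand]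
  apply div_pos (by linarith) (by linarith)

lemma psi_mono {c1 c2 c3 lam mu : ℝ} (hc2 : 0 ≤ c2) (hc3 : 0 ≤ c3)
    (h21 : c2 < c1) (h31 : c3 < c1) (hlam : 0 < lam) (hlm : lam < mu) (hmu : mu * c1 ≤ 1)
    (hS : 1 < psiF c1 c2 c3 lam) : psiF c1 c2 c3 lam < psiF c1 c2 c3 mu := by
  have hc1 : 0 < c1 := lt_of_le_of_lt hc2 h21
  have habove : ∀ t ∈ Set.Icc lam mu, 1 < psiF c1 c2 c3 t := by
    by_contra hcon
    push_neg at hcon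
    obtain ⟨t', ht', hle⟩ := hcon
    set K := Set.Icc lam mu ∩ {t | psiF c1 c2 c3 t ≤ 1} with hKdef
    have hKne : K.Nonempty := ⟨t', ht', hle⟩
    have hKcl : IsClosed K :=
      (isClosed_Icc).inter (isClosed_le (psiF_cont c1 c2 c3) continuous_const)
    have hKbd : BddBelow K := ⟨lam, fun x hx => hx.1.1⟩
    set t0 := sInf K with ht0def
    have ht0K : t0 ∈ K := hKcl.csInf_mem hKne hKbd
    have ht0le : psiF c1 c2 c3 t0 ≤ 1 := ht0K.2
    have ht0lam : lam < t0 := by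
      rcases eq_or_lt_of_le ht0K.1.1 with h | h
      · exfalso; rw [← h] at ht0le; linarith
      · exact h
    have hmono : StrictMonoOn (psiF c1 c2 c3) (Set.Icc lam t0) := by
      apply strictMonoOn_of_deriv_pos (convex_Icc _ _) (psiF_cont _ _ _).continuousOn
      intro x hx
      rw [interior_Icc] at hx
      have hx1 : 0 < x := lt_trans hlam hx.1
      have hxmu : x ≤ mu := le_trans hx.2.le ht0K.1.2
      have hxc1 : x * c1 < 1 := by nlinarith [ht0K.1.2, hx.2]
      apply psi_deriv_pos hc2 hc3 h21 h31 hx1 hxc1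
      by_contra hle2
      push_neg at hle2
      have hxK : x ∈ K := ⟨⟨hx.1.le, hxmu⟩, hle2⟩
      exact absurd (csInf_le hKbd hxK) (not_le.2 hx.2)
    have := hmono ⟨le_refl lam, ht0lam.le⟩ ⟨ht0lam.le, le_refl t0⟩ ht0lam
    linarith
  have hmono : StrictMonoOn (psiF c1 c2 c3) (Set.Icc lam mu) := by
    apply strictMonoOn_of_deriv_pos (convex_Icc _ _) (psiF_cont _ _ _).continuousOn
    intro x hx
    rw [interior_Icc] at hx
    exact psi_deriv_pos hc2 hc3 h21 h31 (lt_trans hlam hx.1) (by nlinarith [hx.2])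
      (habove x ⟨hx.1.le, hx.2.le⟩)
  exact hmono ⟨le_refl _, hlm.le⟩ ⟨hlm.le, le_refl _⟩ hlm

lemma plus_mono {c1 c2 c3 lam mu : ℝ} (hc1 : 0 < c1) (hc2 : 0 ≤ c2) (hc3 : 0 ≤ c3)
    (hlam : 0 ≤ lam) (hlm : lam < mu) (h1 : mu*c1 ≤ 1) (h2 : mu*c2 ≤ 1) (h3 : mu*c3 ≤ 1) :
    Real.sqrt (1-mu*c1) + (Real.sqrt (1-mu*c2) + Real.sqrt (1-mu*c3)) <
    Real.sqrt (1-lam*c1) + (Real.sqrt (1-lam*c2) + Real.sqrt (1-lam*c3)) := by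
  have k1 : Real.sqrt (1-mu*c1) < Real.sqrt (1-lam*c1) := Real.sqrt_lt_sqrt (by nlinarith) (by nlinarith)
  have k2 : Real.sqrt (1-mu*c2) ≤ Real.sqrt (1-lam*c2) := Real.sqrt_le_sqrt (by nlinarith)
  have k3 : Real.sqrt (1-mu*c3) ≤ Real.sqrt (1-lam*c3) := Real.sqrt_le_sqrt (by nlinarith)
  linarith

lemma sqeq {u v : ℝ} (hu : 0 ≤ u) (hv : 0 ≤ v) (h : u^2 = v^2) : u = v := by
  have h2 : |u| = |v| := by rw [← Real.sqrt_sq_eq_abs, ← Real.sqrt_sq_eq_abs, h]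
  rwa [abs_of_nonneg hu, abs_of_nonneg hv] at h2

lemma vle {lam mu w u v : ℝ} (hlm : lam ≤ mu) (hu : u^2 = 1 - lam*w^2)
    (hv : v^2 = 1 - mu*w^2) (hun : 0 ≤ u) : v ≤ u := by
  have h1 : v ≤ |v| := le_abs_self v
  have h2 : |v| ≤ |u| := by
    rw [← Real.sqrt_sq_eq_abs, ← Real.sqrt_sq_eq_abs]
    apply Real.sqrt_le_sqrt
    nlinarith [mul_nonneg (sub_nonneg.2 hlm) (sq_nonneg w)]
  rw [abs_of_nonneg hun] at h2
  linarith

lemma maxfact {lam w1 w2 w3 u1 u2 u3 : ℝ} (hlam : 0 < lam)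
    (h1 : u1^2 = 1 - lam*w1^2) (h2 : u2^2 = 1 - lam*w2^2) (h3 : u3^2 = 1 - lam*w3^2)
    (hn : u1 < 0) (hp2 : 0 ≤ u2) (hp3 : 0 ≤ u3) (hsum : 1 < u1 + u2 + u3) :
    w2^2 < w1^2 ∧ w3^2 < w1^2 := by
  have hu2le : u2 ≤ 1 := by nlinarith [mul_nonneg hlam.le (sq_nonneg w2)]
  have hu3le : u3 ≤ 1 := by nlinarith [mul_nonneg hlam.le (sq_nonneg w3)]
  have k2 : -u1 < u2 := by linarith
  have k3 : -u1 < u3 := by linarith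
  constructor
  · nlinarith
  · nlinarith

lemma eq_slot_neg {u1 u2 u3 v1 v2 v3 : ℝ}
    (hsq1 : u1^2 = v1^2) (hsq2 : u2^2 = v2^2) (hsq3 : u3^2 = v3^2)
    (hun : u1 < 0) (hup2 : 0 ≤ u2) (hup3 : 0 ≤ u3) (hu2le : u2 ≤ 1) (hu3le : u3 ≤ 1)
    (hamo : (0 ≤ v1 ∨ 0 ≤ v2) ∧ (0 ≤ v1 ∨ 0 ≤ v3) ∧ (0 ≤ v2 ∨ 0 ≤ v3))
    (hsum : u1+u2+u3 = v1+v2+v3) (hS : 1 < u1+u2+u3) :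
    u1 = v1 ∧ u2 = v2 ∧ u3 = v3 := by
  have h2 : -u1 < u2 := by linarith
  rcases lt_or_ge v1 0 with hv1 | hv1
  · have hv2 : 0 ≤ v2 := hamo.1.resolve_left (not_le.2 hv1)
    have hv3 : 0 ≤ v3 := hamo.2.1.resolve_left (not_le.2 hv1)
    have e1 : -u1 = -v1 := sqeq (by linarith) (by linarith) (by rw [neg_sq, neg_sq]; exact hsq1)
    exact ⟨by linarith, sqeq hup2 hv2 hsq2, sqeq hup3 hv3 hsq3⟩
  · have hv1e : v1 = -u1 := sqeq hv1 (by linarith) (by rw [neg_sq]; exact hsq1.symm)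
    rcases lt_or_ge v2 0 with hv2 | hv2
    · have hv3 : 0 ≤ v3 := hamo.2.2.resolve_left (not_le.2 hv2)
      have e2 : u2 = -v2 := sqeq hup2 (by linarith) (by rw [neg_sq]; exact hsq2)
      have e3 : u3 = v3 := sqeq hup3 hv3 hsq3
      exfalso; linarith
    · rcases lt_or_ge v3 0 with hv3 | hv3
      · have h3 : -u1 < u3 := by linarith
        have e3 : u3 = -v3 := sqeq hup3 (by linarith) (by rw [neg_sq]; exact hsq3)
        have e2 : u2 = v2 := sqeq hup2 hv2 hsq2
        exfalso; linarith
      · have e2 : u2 = v2 := sqeq hup2 hv2 hsq2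
        have e3 : u3 = v3 := sqeq hup3 hv3 hsq3
        exfalso; linarith

lemma neg_slot {w1 w2 w3 lam mu u1 u2 u3 v1 v2 v3 : ℝ}
    (hlam : 0 < lam) (hmu : 0 < mu) (hlt : lam < mu)
    (hu1 : u1^2 = 1 - lam*w1^2) (hu2 : u2^2 = 1 - lam*w2^2) (hu3 : u3^2 = 1 - lam*w3^2)
    (hv1 : v1^2 = 1 - mu*w1^2) (hv2 : v2^2 = 1 - mu*w2^2) (hv3 : v3^2 = 1 - mu*w3^2)
    (hun : u1 < 0) (hup2 : 0 ≤ u2) (hup3 : 0 ≤ u3)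
    (hvamo : (0 ≤ v1 ∨ 0 ≤ v2) ∧ (0 ≤ v1 ∨ 0 ≤ v3) ∧ (0 ≤ v2 ∨ 0 ≤ v3))
    (hsum : u1+u2+u3 = v1+v2+v3) (hS : 1 < u1+u2+u3) : False := by
  obtain ⟨m2, m3⟩ := maxfact hlam hu1 hu2 hu3 hun hup2 hup3 hS
  have hw1 : 0 < w1^2 := lt_of_le_of_lt (sq_nonneg w2) m2
  have hmuw1 : mu * w1^2 ≤ 1 := by nlinarith [sq_nonneg v1]
  have hpsilam : psiF (w1^2) (w2^2) (w3^2) lam = u1+u2+u3 := by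
    unfold psiF
    rw [show 1 - lam*w1^2 = u1^2 by linarith, show 1 - lam*w2^2 = u2^2 by linarith,
      show (1:ℝ) - lam*w3^2 = u3^2 by linarith, Real.sqrt_sq_eq_abs, Real.sqrt_sq_eq_abs,
      Real.sqrt_sq_eq_abs, abs_of_neg hun, abs_of_nonneg hup2, abs_of_nonneg hup3]
    ring
  have hS' : 1 < psiF (w1^2) (w2^2) (w3^2) lam := by rw [hpsilam]; exact hS
  rcases lt_or_ge v1 0 with hv1n | hv1n
  · have hvp2 : 0 ≤ v2 := hvamo.1.resolve_left (not_le.2 hv1n)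
    have hvp3 : 0 ≤ v3 := hvamo.2.1.resolve_left (not_le.2 hv1n)
    have hpsimu : psiF (w1^2) (w2^2) (w3^2) mu = v1+v2+v3 := by
      unfold psiF
      rw [show 1 - mu*w1^2 = v1^2 by linarith, show 1 - mu*w2^2 = v2^2 by linarith,
        show (1:ℝ) - mu*w3^2 = v3^2 by linarith, Real.sqrt_sq_eq_abs, Real.sqrt_sq_eq_abs,
        Real.sqrt_sq_eq_abs, abs_of_neg hv1n, abs_of_nonneg hvp2, abs_of_nonneg hvp3]
      ring
    have := psi_mono (sq_nonneg w2) (sq_nonneg w3) m2 m3 hlam hlt hmuw1 hS'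
    rw [hpsilam, hpsimu] at this
    linarith
  · rcases lt_or_ge v2 0 with hv2n | hv2n
    · have hvp3 : 0 ≤ v3 := hvamo.2.2.resolve_left (not_le.2 hv2n)
      have hvsum : 1 < v2 + v1 + v3 := by linarith
      obtain ⟨c1, _⟩ := maxfact hmu hv2 hv1 hv3 hv2n hv1n hvp3 hvsum
      linarith
    · rcases lt_or_ge v3 0 with hv3n | hv3n
      · have hvsum : 1 < v3 + v1 + v2 := by linarith
        obtain ⟨c1, _⟩ := maxfact hmu hv3 hv1 hv2 hv3n hv1n hv2n hvsum
        linarith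
      · -- v all nonneg : plus-branch comparison via endpoint T
        have hTw : (1/w1^2)*w1^2 = 1 := one_div_mul_cancel hw1.ne'
        have hmuT : mu ≤ 1/w1^2 := by rw [le_div_iff₀ hw1]; linarith
        have hlamT : lam < 1/w1^2 := lt_of_lt_of_le hlt hmuT
        have h1 := psi_mono (sq_nonneg w2) (sq_nonneg w3) m2 m3 hlam hlamT (le_of_eq hTw) hS'
        have hT0 : Real.sqrt (1 - (1/w1^2)*w1^2) = 0 := by rw [hTw]; simp
        rw [hpsilam] at h1
        unfold psiF at h1
        rw [hT0] at h1
        have k2 : Real.sqrt (1-(1/w1^2)*w2^2) ≤ Real.sqrt (1-mu*w2^2) :=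
          Real.sqrt_le_sqrt (by nlinarith [mul_nonneg (sub_nonneg.2 hmuT) (sq_nonneg w2)])
        have k3 : Real.sqrt (1-(1/w1^2)*w3^2) ≤ Real.sqrt (1-mu*w3^2) :=
          Real.sqrt_le_sqrt (by nlinarith [mul_nonneg (sub_nonneg.2 hmuT) (sq_nonneg w3)])
        have e2 : Real.sqrt (1-mu*w2^2) = v2 := by
          rw [show 1 - mu*w2^2 = v2^2 by linarith, Real.sqrt_sq hv2n]
        have e3 : Real.sqrt (1-mu*w3^2) = v3 := by
          rw [show 1 - mu*w3^2 = v3^2 by linarith, Real.sqrt_sq hv3n]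
        rw [e2] at k2; rw [e3] at k3
        linarith

set_option maxHeartbeats 1000000 in
lemma uniq_aux {w1 w2 w3 lam mu u1 u2 u3 v1 v2 v3 : ℝ}
    (hlam : 0 < lam) (hmu : 0 < mu) (hle : lam ≤ mu)
    (hu1 : u1^2 = 1 - lam*w1^2) (hu2 : u2^2 = 1 - lam*w2^2) (hu3 : u3^2 = 1 - lam*w3^2)
    (hv1 : v1^2 = 1 - mu*w1^2) (hv2 : v2^2 = 1 - mu*w2^2) (hv3 : v3^2 = 1 - mu*w3^2)
    (hub1 : -1 < u1) (hub2 : -1 < u2) (hub3 : -1 < u3)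
    (hvb1 : -1 < v1) (hvb2 : -1 < v2) (hvb3 : -1 < v3)
    (huamo : (0 ≤ u1 ∨ 0 ≤ u2) ∧ (0 ≤ u1 ∨ 0 ≤ u3) ∧ (0 ≤ u2 ∨ 0 ≤ u3))
    (hvamo : (0 ≤ v1 ∨ 0 ≤ v2) ∧ (0 ≤ v1 ∨ 0 ≤ v3) ∧ (0 ≤ v2 ∨ 0 ≤ v3))
    (hsum : u1+u2+u3 = v1+v2+v3) (hS : 1 < u1+u2+u3) :
    u1 = v1 ∧ u2 = v2 ∧ u3 = v3 := by
  have hu1le : u1 ≤ 1 := by nlinarith [mul_nonneg hlam.le (sq_nonneg w1)]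
  have hu2le : u2 ≤ 1 := by nlinarith [mul_nonneg hlam.le (sq_nonneg w2)]
  have hu3le : u3 ≤ 1 := by nlinarith [mul_nonneg hlam.le (sq_nonneg w3)]
  rcases eq_or_lt_of_le hle with heq | hlt
  · -- equal parameters
    subst heq
    have hsq1 : u1^2 = v1^2 := by rw [hu1, hv1]
    have hsq2 : u2^2 = v2^2 := by rw [hu2, hv2]
    have hsq3 : u3^2 = v3^2 := by rw [hu3, hv3]
    rcases lt_or_ge u1 0 with h | hp1
    · have hp2 : 0 ≤ u2 := huamo.1.resolve_left (not_le.2 h)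
      have hp3 : 0 ≤ u3 := huamo.2.1.resolve_left (not_le.2 h)
      exact eq_slot_neg hsq1 hsq2 hsq3 h hp2 hp3 hu2le hu3le hvamo hsum hS
    · rcases lt_or_ge u2 0 with h | hp2
      · have hp3 : 0 ≤ u3 := huamo.2.2.resolve_left (not_le.2 h)
        have amo2 : (0 ≤ v2 ∨ 0 ≤ v1) ∧ (0 ≤ v2 ∨ 0 ≤ v3) ∧ (0 ≤ v1 ∨ 0 ≤ v3) := by tauto
        obtain ⟨a, b, c⟩ := eq_slot_neg hsq2 hsq1 hsq3 h hp1 hp3 hu1le hu3le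
          amo2 (by linarith) (by linarith)
        exact ⟨b, a, c⟩
      · rcases lt_or_ge u3 0 with h | hp3
        · have amo3 : (0 ≤ v3 ∨ 0 ≤ v1) ∧ (0 ≤ v3 ∨ 0 ≤ v2) ∧ (0 ≤ v1 ∨ 0 ≤ v2) := by tauto
          obtain ⟨a, b, c⟩ := eq_slot_neg hsq3 hsq1 hsq2 h hp1 hp2 hu1le hu2le
            amo3 (by linarith) (by linarith)
          exact ⟨b, c, a⟩
        · -- u all nonneg
          have k1 : v1 ≤ u1 := vle le_rfl hu1 hv1 hp1
          have k2 : v2 ≤ u2 := vle le_rfl hu2 hv2 hp2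
          have k3 : v3 ≤ u3 := vle le_rfl hu3 hv3 hp3
          exact ⟨by linarith, by linarith, by linarith⟩
  · -- strict
    rcases lt_or_ge u1 0 with h | hp1
    · have hp2 : 0 ≤ u2 := huamo.1.resolve_left (not_le.2 h)
      have hp3 : 0 ≤ u3 := huamo.2.1.resolve_left (not_le.2 h)
      exact absurd (neg_slot hlam hmu hlt hu1 hu2 hu3 hv1 hv2 hv3 h hp2 hp3 hvamo hsum hS) id
    · rcases lt_or_ge u2 0 with h | hp2
      · have hp3 : 0 ≤ u3 := huamo.2.2.resolve_left (not_le.2 h)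
        have amo2 : (0 ≤ v2 ∨ 0 ≤ v1) ∧ (0 ≤ v2 ∨ 0 ≤ v3) ∧ (0 ≤ v1 ∨ 0 ≤ v3) := by tauto
        exact absurd (neg_slot hlam hmu hlt hu2 hu1 hu3 hv2 hv1 hv3 h hp1 hp3
          amo2 (by linarith) (by linarith)) id
      · rcases lt_or_ge u3 0 with h | hp3
        · have amo3 : (0 ≤ v3 ∨ 0 ≤ v1) ∧ (0 ≤ v3 ∨ 0 ≤ v2) ∧ (0 ≤ v1 ∨ 0 ≤ v2) := by tauto
          exact absurd (neg_slot hlam hmu hlt hu3 hu1 hu2 hv3 hv1 hv2 h hp1 hp2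
            amo3 (by linarith) (by linarith)) id
        · have k1 : v1 ≤ u1 := vle hle hu1 hv1 hp1
          have k2 : v2 ≤ u2 := vle hle hu2 hv2 hp2
          have k3 : v3 ≤ u3 := vle hle hu3 hv3 hp3
          exact ⟨by linarith, by linarith, by linarith⟩

lemma uniq {w1 w2 w3 lam mu u1 u2 u3 v1 v2 v3 : ℝ}
    (hlam : 0 < lam) (hmu : 0 < mu)
    (hu1 : u1^2 = 1 - lam*w1^2) (hu2 : u2^2 = 1 - lam*w2^2) (hu3 : u3^2 = 1 - lam*w3^2)
    (hv1 : v1^2 = 1 - mu*w1^2) (hv2 : v2^2 = 1 - mu*w2^2) (hv3 : v3^2 = 1 - mu*w3^2)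
    (hub1 : -1 < u1) (hub2 : -1 < u2) (hub3 : -1 < u3)
    (hvb1 : -1 < v1) (hvb2 : -1 < v2) (hvb3 : -1 < v3)
    (huamo : (0 ≤ u1 ∨ 0 ≤ u2) ∧ (0 ≤ u1 ∨ 0 ≤ u3) ∧ (0 ≤ u2 ∨ 0 ≤ u3))
    (hvamo : (0 ≤ v1 ∨ 0 ≤ v2) ∧ (0 ≤ v1 ∨ 0 ≤ v3) ∧ (0 ≤ v2 ∨ 0 ≤ v3))
    (hsum : u1+u2+u3 = v1+v2+v3) (hS : 1 < u1+u2+u3) :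
    u1 = v1 ∧ u2 = v2 ∧ u3 = v3 := by
  rcases le_total lam mu with h | h
  · exact uniq_aux hlam hmu h hu1 hu2 hu3 hv1 hv2 hv3 hub1 hub2 hub3 hvb1 hvb2 hvb3
      huamo hvamo hsum hS
  · obtain ⟨a, b, c⟩ := uniq_aux hmu hlam h hv1 hv2 hv3 hu1 hu2 hu3 hvb1 hvb2 hvb3
      hub1 hub2 hub3 hvamo huamo hsum.symm (by linarith)
    exact ⟨a.symm, b.symm, c.symm⟩


/-- choose an angle in [-π,π) with given sine and cosine sign -/
lemma branch (x eps : ℝ) (hx1 : -1 ≤ x) (hx2 : x ≤ 1) (heps : eps = 1 ∨ eps = -1) :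
    ∃ p, (-π ≤ p ∧ p < π) ∧ Real.sin p = x ∧ Real.cos p = eps * Real.sqrt (1 - x^2) := by
  have hpi := Real.pi_pos
  have hpi2 := Real.pi_div_two_pos
  rcases heps with h | h
  · subst h
    refine ⟨Real.arcsin x, ⟨?_, ?_⟩, Real.sin_arcsin hx1 hx2, by rw [Real.cos_arcsin]; ring⟩
    · linarith [Real.neg_pi_div_two_le_arcsin x]
    · linarith [Real.arcsin_le_pi_div_two x]
  · subst h
    rcases lt_or_ge 0 x with hx | hx
    · refine ⟨π - Real.arcsin x, ⟨?_, ?_⟩, ?_, ?_⟩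
      · linarith [Real.arcsin_le_pi_div_two x]
      · have := Real.arcsin_pos.2 hx; linarith
      · rw [Real.sin_pi_sub, Real.sin_arcsin hx1 hx2]
      · rw [Real.cos_pi_sub, Real.cos_arcsin]; ring
    · refine ⟨-π - Real.arcsin x, ⟨?_, ?_⟩, ?_, ?_⟩
      · have := Real.arcsin_nonpos.2 hx; linarith
      · linarith [Real.neg_pi_div_two_le_arcsin x]
      · rw [Real.sin_sub, Real.sin_arcsin hx1 hx2]; simp
      · rw [Real.cos_sub, Real.cos_arcsin]; simp

set_option maxHeartbeats 2000000 in
lemma surj_core {w1 w2 w3 a e2 e3' : ℝ}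
    (he2 : e2 = 1 ∨ e2 = -1) (he3 : e3' = 1 ∨ e3' = -1)
    (hw : w1^2 + w2^2 + w3^2 = 1) (hm2 : w2^2 ≤ w1^2) (hm3 : w3^2 ≤ w1^2)
    (hlo : (1-e2)+(1-e3') < a) (hhi : a < 2+((1-e2)+(1-e3'))) :
    ∃ p1 p2 p3 t, 0 < t ∧
      (-π ≤ p1 ∧ p1 < π) ∧ (-π ≤ p2 ∧ p2 < π) ∧ (-π ≤ p3 ∧ p3 < π) ∧
      (1-Real.cos p1)+((1-Real.cos p2)+(1-Real.cos p3)) = a ∧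
      Real.sin p1 = t*w1 ∧ Real.sin p2 = t*w2 ∧ Real.sin p3 = t*w3 := by
  have hpi := Real.pi_pos
  have hw1 : 0 < w1^2 := by nlinarith
  set D : ℝ → ℝ := fun u =>
    (1 - Real.cos u) + ((1 - e2*Real.sqrt (1 - Real.sin u^2*(w2^2/w1^2)))
      + (1 - e3'*Real.sqrt (1 - Real.sin u^2*(w3^2/w1^2)))) with hD
  have hcont : Continuous D := by
    apply Continuous.add
    · exact (continuous_const.sub Real.continuous_cos)
    · apply Continuous.add <;>
      · apply Continuous.sub continuous_const
        apply Continuous.mul continuous_const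
        apply Real.continuous_sqrt.comp
        fun_prop
  have hD0 : D 0 = (1-e2)+(1-e3') := by simp [hD]
  have hDpi : D π = 2+((1-e2)+(1-e3')) := by simp [hD]; ring
  have hsub := intermediate_value_Ioo (le_of_lt hpi) hcont.continuousOn (a := 0) (b := π)
  rw [hD0, hDpi] at hsub
  obtain ⟨u, hu, hDu⟩ := hsub ⟨hlo, hhi⟩
  have hs : 0 < Real.sin u := Real.sin_pos_of_pos_of_lt_pi hu.1 hu.2
  have hs1 : Real.sin u ≤ 1 := Real.sin_le_one u
  set m := Real.sqrt (w1^2) with hm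
  have hmpos : 0 < m := Real.sqrt_pos.2 hw1
  have hmsq : m^2 = w1^2 := Real.sq_sqrt (le_of_lt hw1)
  set t := Real.sin u / m with ht
  have htpos : 0 < t := div_pos hs hmpos
  -- slot 2
  have hx2sq : (t*w2)^2 = Real.sin u^2*(w2^2/w1^2) := by
    rw [ht, mul_pow, div_pow, hmsq]; ring
  have hx2abs : (t*w2)^2 ≤ 1 := by
    rw [hx2sq]
    have : w2^2/w1^2 ≤ 1 := by rw [div_le_one hw1]; exact hm2
    nlinarith [sq_nonneg (Real.sin u), div_nonneg (sq_nonneg w2) (le_of_lt hw1)]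
  obtain ⟨p2, hbox2, hsin2, hcos2⟩ := branch (t*w2) e2
    (by nlinarith [sq_nonneg (t*w2+1)]) (by nlinarith [sq_nonneg (t*w2-1)]) he2
  have hx3sq : (t*w3)^2 = Real.sin u^2*(w3^2/w1^2) := by
    rw [ht, mul_pow, div_pow, hmsq]; ring
  have hx3abs : (t*w3)^2 ≤ 1 := by
    rw [hx3sq]
    have : w3^2/w1^2 ≤ 1 := by rw [div_le_one hw1]; exact hm3
    nlinarith [sq_nonneg (Real.sin u), div_nonneg (sq_nonneg w3) (le_of_lt hw1)]
  obtain ⟨p3, hbox3, hsin3, hcos3⟩ := branch (t*w3) e3'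
    (by nlinarith [sq_nonneg (t*w3+1)]) (by nlinarith [sq_nonneg (t*w3-1)]) he3
  -- slot 1
  refine ⟨if 0 < w1 then u else -u, p2, p3, t, htpos, ?_, hbox2, hbox3, ?_, ?_, hsin2, hsin3⟩
  · split
    · exact ⟨by linarith [hu.1], hu.2⟩
    · exact ⟨by linarith [hu.2], by linarith [hu.1]⟩
  · have hcos1 : Real.cos (if 0 < w1 then u else -u) = Real.cos u := by
      split <;> simp
    rw [hcos1, hcos2, hcos3,
      show (1:ℝ) - (t*w2)^2 = 1 - Real.sin u^2*(w2^2/w1^2) by rw [hx2sq],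
      show (1:ℝ) - (t*w3)^2 = 1 - Real.sin u^2*(w3^2/w1^2) by rw [hx3sq]]
    exact hDu
  · rcases lt_or_ge 0 w1 with h | h
    · rw [if_pos h, ht]
      have hme : m = w1 := by rw [hm, Real.sqrt_sq (le_of_lt h)]
      rw [hme, div_mul_cancel₀ _ (ne_of_gt h)]
    · have hne : w1 ≠ 0 := by intro h0; rw [h0] at hw1; simp at hw1
      have hlt : w1 < 0 := lt_of_le_of_ne h hne
      rw [if_neg (not_lt.2 h), Real.sin_neg, ht]
      have hme : m = -w1 := by rw [hm, Real.sqrt_sq_eq_abs, abs_of_neg hlt]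
      rw [hme, div_neg, neg_mul, div_mul_cancel₀ _ hne]

lemma cos_pm {x : ℝ} (h : Real.sin x = 0) : Real.cos x = 1 ∨ Real.cos x = -1 := by
  have h1 := Real.sin_sq_add_cos_sq x
  have h2 : (Real.cos x - 1) * (Real.cos x + 1) = 0 := by nlinarith
  rcases mul_eq_zero.1 h2 with h3 | h3
  · left; linarith
  · right; linarith

lemma ssum_pos_of {p : Fin 3 → ℝ} {a : ℝ} (he : e3 p = a)
    (h0 : a ≠ 0) (h2 : a ≠ 2) (h4 : a ≠ 4) (h6 : a ≠ 6) : 0 < ssum p := by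
  rcases lt_or_ge 0 (ssum p) with h | h
  · exact h
  exfalso
  have hss : Real.sin (p 0)^2 + Real.sin (p 1)^2 + Real.sin (p 2)^2 ≤ 0 := by
    have : ssum p = Real.sin (p 0)^2 + Real.sin (p 1)^2 + Real.sin (p 2)^2 := by
      rw [ssum, Fin.sum_univ_three]
    linarith
  have s0 : Real.sin (p 0) = 0 := by nlinarith [sq_nonneg (Real.sin (p 0)), sq_nonneg (Real.sin (p 1)), sq_nonneg (Real.sin (p 2))]
  have s1 : Real.sin (p 1) = 0 := by nlinarith [sq_nonneg (Real.sin (p 0)), sq_nonneg (Real.sin (p 1)), sq_nonneg (Real.sin (p 2))]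
  have s2 : Real.sin (p 2) = 0 := by nlinarith [sq_nonneg (Real.sin (p 0)), sq_nonneg (Real.sin (p 1)), sq_nonneg (Real.sin (p 2))]
  have he' : (1 - Real.cos (p 0)) + (1 - Real.cos (p 1)) + (1 - Real.cos (p 2)) = a := by
    rw [← he, e3, Fin.sum_univ_three]
  rcases cos_pm s0 with c0 | c0 <;> rcases cos_pm s1 with c1 | c1 <;>
    rcases cos_pm s2 with c2 | c2 <;> rw [c0, c1, c2] at he' <;>
    first
      | exact h0 (by linarith)
      | exact h2 (by linarith)
      | exact h4 (by linarith)
      | exact h6 (by linarith)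

lemma nuf_eq {p : Fin 3 → ℝ} {w : Fin 3 → ℝ} {t : ℝ} (ht : 0 < t)
    (hs : ∀ i, Real.sin (p i) = t * w i) (hw : ∑ i, w i ^ 2 = 1) :
    ssum p = t^2 ∧ nuf p = w := by
  have hw' : w 0^2 + w 1^2 + w 2^2 = 1 := by rw [← hw, Fin.sum_univ_three]
  have hss : ssum p = t^2 := by
    rw [ssum, Fin.sum_univ_three, hs 0, hs 1, hs 2]
    nlinarith [hw']
  refine ⟨hss, ?_⟩
  funext i
  rw [nuf, hss, Real.sqrt_sq ht.le, hs i, mul_comm, mul_div_assoc, div_self (ne_of_gt ht), mul_one]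

lemma maps_sph {p : Fin 3 → ℝ} (hS : 0 < ssum p) : nuf p ∈ sph := by
  have h : ∑ i, (nuf p) i ^ 2 = (∑ i, Real.sin (p i)^2) / ssum p := by
    rw [Fin.sum_univ_three, Fin.sum_univ_three]
    simp only [nuf, div_pow, Real.sq_sqrt hS.le]
    ring
  rw [sph, Set.mem_setOf_eq, h]
  rw [show (∑ i, Real.sin (p i)^2) = ssum p from rfl]
  field_simp

lemma build {a t : ℝ} {w : Fin 3 → ℝ} (q0 q1 q2 : ℝ)
    (hb0 : -π ≤ q0 ∧ q0 < π) (hb1 : -π ≤ q1 ∧ q1 < π) (hb2 : -π ≤ q2 ∧ q2 < π)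
    (hE : (1-Real.cos q0)+(1-Real.cos q1)+(1-Real.cos q2) = a)
    (ht : 0 < t) (hs0 : Real.sin q0 = t * w 0) (hs1 : Real.sin q1 = t * w 1)
    (hs2 : Real.sin q2 = t * w 2) (hw : w ∈ sph) :
    ∃ p ∈ box, e3 p = a ∧ 0 < ssum p ∧ nuf p = w := by
  have hsall : ∀ i, Real.sin ((![q0, q1, q2] : Fin 3 → ℝ) i) = t * w i := by
    intro i; fin_cases i
    · exact hs0
    · exact hs1
    · exact hs2
  obtain ⟨hss, hnu⟩ := nuf_eq ht hsall hw
  refine ⟨![q0, q1, q2], ?_, ?_, ?_, hnu⟩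
  · intro i; fin_cases i
    · exact hb0
    · exact hb1
    · exact hb2
  · rw [e3, Fin.sum_univ_three]
    simpa using hE
  · rw [hss]; positivity

lemma exists_p {a : ℝ} (h1 : 0 < a) (h6 : a < 6) (h2 : a ≠ 2) (h4 : a ≠ 4) :
    ∀ ω ∈ sph, ∃ p ∈ box, e3 p = a ∧ 0 < ssum p ∧ nuf p = ω := by
  intro ω hω
  have hωe : ω 0^2 + ω 1^2 + ω 2^2 = 1 := by
    have := hω; rw [sph, Set.mem_setOf_eq, Fin.sum_univ_three] at this; exact this
  obtain ⟨f2, f3, hf2, hf3, hlo, hhi⟩ : ∃ f2 f3 : ℝ, (f2 = 1 ∨ f2 = -1) ∧ (f3 = 1 ∨ f3 = -1)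
      ∧ (1-f2)+(1-f3) < a ∧ a < 2+((1-f2)+(1-f3)) := by
    rcases lt_trichotomy a 2 with h | h | h
    · exact ⟨1, 1, Or.inl rfl, Or.inl rfl, by norm_num; linarith, by norm_num; linarith⟩
    · exact absurd h h2
    · rcases lt_trichotomy a 4 with h' | h' | h'
      · exact ⟨-1, 1, Or.inr rfl, Or.inl rfl, by norm_num; linarith, by norm_num; linarith⟩
      · exact absurd h' h4
      · exact ⟨-1, -1, Or.inr rfl, Or.inr rfl, by norm_num; linarith, by norm_num; linarith⟩
  rcases le_total (ω 1^2) (ω 0^2) with h10 | h10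
  · rcases le_total (ω 2^2) (ω 0^2) with h20 | h20
    · obtain ⟨q1, q2, q3, t, ht, hbx1, hbx2, hbx3, hE, hsn1, hsn2, hsn3⟩ :=
        surj_core hf2 hf3 hωe h10 h20 hlo hhi
      exact build q1 q2 q3 hbx1 hbx2 hbx3 (by linarith) ht hsn1 hsn2 hsn3 hω
    · obtain ⟨q1, q2, q3, t, ht, hbx1, hbx2, hbx3, hE, hsn1, hsn2, hsn3⟩ :=
        surj_core hf2 hf3 (by linarith : ω 2^2 + ω 0^2 + ω 1^2 = 1)
          (by linarith) (by linarith) hlo hhi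
      exact build q2 q3 q1 hbx2 hbx3 hbx1 (by linarith) ht hsn2 hsn3 hsn1 hω
  · rcases le_total (ω 2^2) (ω 1^2) with h21 | h21
    · obtain ⟨q1, q2, q3, t, ht, hbx1, hbx2, hbx3, hE, hsn1, hsn2, hsn3⟩ :=
        surj_core hf2 hf3 (by linarith : ω 1^2 + ω 0^2 + ω 2^2 = 1)
          (by linarith) (by linarith) hlo hhi
      exact build q2 q1 q3 hbx2 hbx1 hbx3 (by linarith) ht hsn2 hsn1 hsn3 hω
    · obtain ⟨q1, q2, q3, t, ht, hbx1, hbx2, hbx3, hE, hsn1, hsn2, hsn3⟩ :=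
        surj_core hf2 hf3 (by linarith : ω 2^2 + ω 0^2 + ω 1^2 = 1)
          (by linarith) (by linarith) hlo hhi
      exact build q2 q3 q1 hbx2 hbx3 hbx1 (by linarith) ht hsn2 hsn3 hsn1 hω

lemma inj_on {a : ℝ} (ha : (0 < a ∧ a < 2) ∨ (4 < a ∧ a < 6)) :
    Set.InjOn nuf {p | p ∈ box ∧ e3 p = a} := by
  intro p hp q hq hpq
  have hane : a ≠ 0 ∧ a ≠ 2 ∧ a ≠ 4 ∧ a ≠ 6 := by
    rcases ha with ⟨x, y⟩ | ⟨x, y⟩ <;>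
      exact ⟨by intro h; rw [h] at x y; linarith, by intro h; rw [h] at x y; linarith,
        by intro h; rw [h] at x y; linarith, by intro h; rw [h] at x y; linarith⟩
  have hSp : 0 < ssum p := ssum_pos_of hp.2 hane.1 hane.2.1 hane.2.2.1 hane.2.2.2
  have hSq : 0 < ssum q := ssum_pos_of hq.2 hane.1 hane.2.1 hane.2.2.1 hane.2.2.2
  set w := nuf p with hwdef
  have hwq : nuf q = w := hpq.symm
  have hw : ∑ i, w i ^ 2 = 1 := maps_sph hSp
  set t := Real.sqrt (ssum p) with htd
  set s := Real.sqrt (ssum q) with hsd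
  have ht : 0 < t := Real.sqrt_pos.2 hSp
  have hs : 0 < s := Real.sqrt_pos.2 hSq
  have htsq : t^2 = ssum p := Real.sq_sqrt hSp.le
  have hssq : s^2 = ssum q := Real.sq_sqrt hSq.le
  have hsinp : ∀ i, Real.sin (p i) = t * w i := by
    intro i
    show Real.sin (p i) = t * (Real.sin (p i) / Real.sqrt (ssum p))
    rw [← htd, mul_comm, div_mul_cancel₀ _ (ne_of_gt ht)]
  have hsinq : ∀ i, Real.sin (q i) = s * w i := by
    intro i
    rw [← hwq]
    show Real.sin (q i) = s * (Real.sin (q i) / Real.sqrt (ssum q))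
    rw [← hsd, mul_comm, div_mul_cancel₀ _ (ne_of_gt hs)]
  have hup : ∀ i, Real.cos (p i)^2 = 1 - ssum p * (w i)^2 := by
    intro i
    have h1 := Real.sin_sq_add_cos_sq (p i)
    have h3 : Real.sin (p i)^2 = ssum p * w i^2 := by rw [hsinp i, ← htsq]; ring
    linarith
  have huq : ∀ i, Real.cos (q i)^2 = 1 - ssum q * (w i)^2 := by
    intro i
    have h1 := Real.sin_sq_add_cos_sq (q i)
    have h3 : Real.sin (q i)^2 = ssum q * w i^2 := by rw [hsinq i, ← hssq]; ring
    linarith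
  have hep : (1 - Real.cos (p 0)) + (1 - Real.cos (p 1)) + (1 - Real.cos (p 2)) = a := by
    rw [← hp.2, e3, Fin.sum_univ_three]
  have heq : (1 - Real.cos (q 0)) + (1 - Real.cos (q 1)) + (1 - Real.cos (q 2)) = a := by
    rw [← hq.2, e3, Fin.sum_univ_three]
  have c0le := Real.cos_le_one (p 0); have c1le := Real.cos_le_one (p 1)
  have c2le := Real.cos_le_one (p 2)
  have d0le := Real.cos_le_one (q 0); have d1le := Real.cos_le_one (q 1)
  have d2le := Real.cos_le_one (q 2)
  have c0ge := Real.neg_one_le_cos (p 0); have c1ge := Real.neg_one_le_cos (p 1)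
  have c2ge := Real.neg_one_le_cos (p 2)
  have d0ge := Real.neg_one_le_cos (q 0); have d1ge := Real.neg_one_le_cos (q 1)
  have d2ge := Real.neg_one_le_cos (q 2)
  have hcos : Real.cos (p 0) = Real.cos (q 0) ∧ Real.cos (p 1) = Real.cos (q 1) ∧
      Real.cos (p 2) = Real.cos (q 2) := by
    rcases ha with ⟨ha1, ha2⟩ | ⟨ha1, ha2⟩
    · refine uniq (w1 := w 0) (w2 := w 1) (w3 := w 2) hSp hSq (hup 0) (hup 1) (hup 2) (huq 0) (huq 1) (huq 2)
        (by linarith) (by linarith) (by linarith) (by linarith) (by linarith) (by linarith)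
        ⟨?_, ?_, ?_⟩ ⟨?_, ?_, ?_⟩ (by linarith) (by linarith) <;>
      · by_contra hcon
        push_neg at hcon
        obtain ⟨x, y⟩ := hcon
        linarith
    · have key := uniq (w1 := w 0) (w2 := w 1) (w3 := w 2) (u1 := -Real.cos (p 0)) (u2 := -Real.cos (p 1)) (u3 := -Real.cos (p 2))
        (v1 := -Real.cos (q 0)) (v2 := -Real.cos (q 1)) (v3 := -Real.cos (q 2))
        hSp hSq (by rw [neg_sq]; exact hup 0) (by rw [neg_sq]; exact hup 1)
        (by rw [neg_sq]; exact hup 2) (by rw [neg_sq]; exact huq 0)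
        (by rw [neg_sq]; exact huq 1) (by rw [neg_sq]; exact huq 2)
        (by linarith) (by linarith) (by linarith) (by linarith) (by linarith) (by linarith)
        ⟨?_, ?_, ?_⟩ ⟨?_, ?_, ?_⟩ (by linarith) (by linarith)
      · exact ⟨by linarith [key.1], by linarith [key.2.1], by linarith [key.2.2]⟩
      all_goals
        by_contra hcon
        push_neg at hcon
        obtain ⟨x, y⟩ := hcon
        linarith
  have keyc : ∀ i, Real.cos (p i) = Real.cos (q i) := by
    intro i; fin_cases i
    · exact hcos.1
    · exact hcos.2.1
    · exact hcos.2.2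
  have keys : ∀ i, Real.sin (p i) = Real.sin (q i) := by
    intro i
    rcases eq_or_ne (w i) 0 with h | h
    · rw [hsinp i, hsinq i, h, mul_zero, mul_zero]
    · have hsq2 : Real.sin (p i)^2 = Real.sin (q i)^2 := by
        have h1 := Real.sin_sq_add_cos_sq (p i)
        have h2 := Real.sin_sq_add_cos_sq (q i)
        rw [keyc i] at h1; linarith
      have e' : t^2 * (w i)^2 = s^2 * (w i)^2 := by
        rw [hsinp i, hsinq i] at hsq2; ring_nf at hsq2 ⊢; linarith
      have hts : t = s := sqeq ht.le hs.le (mul_right_cancel₀ (pow_ne_zero 2 h) e')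
      rw [hsinp i, hsinq i, hts]
  funext i
  exact angle_inj (hp.1 i).1 (hp.1 i).2 (hq.1 i).1 (hq.1 i).2 (keyc i) (keys i)

/-- For `a ∈ (0,2) ∪ (2,4) ∪ (4,6)` the normal map `ν : Σ_a → S²` is surjective;
for `a ∈ (0,2) ∪ (4,6)` it is bijective. -/
theorem stmt7 (a : ℝ) :
    (a ∈ Set.Ioo (0:ℝ) 2 ∪ Set.Ioo (2:ℝ) 4 ∪ Set.Ioo (4:ℝ) 6 →
      ∀ ω ∈ sph, ∃ p ∈ box, e3 p = a ∧ 0 < ssum p ∧ nuf p = ω) ∧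
    (a ∈ Set.Ioo (0:ℝ) 2 ∪ Set.Ioo (4:ℝ) 6 →
      Set.BijOn nuf {p ∈ box | e3 p = a} sph) := by
  constructor
  · intro ha
    have h : 0 < a ∧ a < 6 ∧ a ≠ 2 ∧ a ≠ 4 := by
      rcases ha with (⟨x, y⟩ | ⟨x, y⟩) | ⟨x, y⟩ <;>
        exact ⟨by linarith, by linarith, by intro h; rw [h] at x y; linarith,
          by intro h; rw [h] at x y; linarith⟩
    exact exists_p h.1 h.2.1 h.2.2.1 h.2.2.2
  · intro ha
    have ha' : (0 < a ∧ a < 2) ∨ (4 < a ∧ a < 6) := by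
      rcases ha with ⟨x, y⟩ | ⟨x, y⟩
      exacts [Or.inl ⟨x, y⟩, Or.inr ⟨x, y⟩]
    have hane : a ≠ 0 ∧ a ≠ 2 ∧ a ≠ 4 ∧ a ≠ 6 := by
      rcases ha' with ⟨x, y⟩ | ⟨x, y⟩ <;>
        exact ⟨by intro h; rw [h] at x y; linarith, by intro h; rw [h] at x y; linarith,
          by intro h; rw [h] at x y; linarith, by intro h; rw [h] at x y; linarith⟩
    refine ⟨?_, inj_on ha', ?_⟩
    · intro p hp
      exact maps_sph (ssum_pos_of hp.2 hane.1 hane.2.1 hane.2.2.1 hane.2.2.2)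
    · intro ω hω
      obtain ⟨p, hb, he, hspos, hn⟩ := exists_p (by rcases ha' with ⟨x,y⟩|⟨x,y⟩ <;> linarith)
        (by rcases ha' with ⟨x,y⟩|⟨x,y⟩ <;> linarith) hane.2.1 hane.2.2.1 ω hω
      exact ⟨p, ⟨hb, he⟩, hn⟩
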